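/- Let X₀,…,X_{n-1} be i.i.d. complex-valued random variables with |X_i| = 1, and let m_n be a median of CF_n(s). Then for every α ≥ 0, P(|CF_n(s) − m_n| ≥ α) ≤ 4 exp(−α²/16). -/

import Mathlib

open MeasureTheory Finset


noncomputable def ofdm (n : ℕ) (T : ℝ) (x : Fin n → ℂ) (t : ℝ) : ℂ :=
  ((Real.sqrt n : ℝ) : ℂ)⁻¹ *
    ∑ i : Fin n, x i * Complex.exp (Complex.I * ((2 * Real.pi * (i : ℕ) * t / T : ℝ) : ℂ))

noncomputable def crest (n : ℕ) (T : ℝ) (x : Fin n → ℂ) : ℝ :=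
  sSup ((fun t => ‖ofdm n T x t‖) '' Set.Icc (0 : ℝ) T)

lemma ofdm_norm_le (n : ℕ) (T : ℝ) (x : Fin n → ℂ) (t : ℝ) :
    ‖ofdm n T x t‖ ≤ (Real.sqrt n)⁻¹ * ∑ i, ‖x i‖ := by
  rw [ofdm, norm_mul]
  gcongr ?_ * ?_
  · rw [norm_inv, Complex.norm_real, Real.norm_eq_abs, abs_of_nonneg (Real.sqrt_nonneg _)]
  · refine (norm_sum_le _ _).trans ?_
    refine Finset.sum_le_sum fun i _ => ?_
    rw [norm_mul, Complex.norm_exp]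
    have : (Complex.I * ((2 * Real.pi * (i:ℕ) * t / T : ℝ) : ℂ)).re = 0 := by simp
    rw [this, Real.exp_zero, mul_one]

lemma ofdm_sub (n : ℕ) (T : ℝ) (x y : Fin n → ℂ) (t : ℝ) :
    ofdm n T x t - ofdm n T y t = ofdm n T (x - y) t := by
  simp [ofdm, ← mul_sub, ← Finset.sum_sub_distrib, sub_mul]

lemma crest_bddAbove (n : ℕ) (T : ℝ) (x : Fin n → ℂ) :
    BddAbove ((fun t => ‖ofdm n T x t‖) '' Set.Icc (0 : ℝ) T) := by
  refine ⟨(Real.sqrt n)⁻¹ * ∑ i, ‖x i‖, ?_⟩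
  rintro a ⟨t, _, rfl⟩
  exact ofdm_norm_le n T x t

lemma norm_ofdm_le_crest (n : ℕ) (T : ℝ) (hT : 0 ≤ T) (x : Fin n → ℂ) {t : ℝ}
    (ht : t ∈ Set.Icc (0:ℝ) T) : ‖ofdm n T x t‖ ≤ crest n T x :=
  le_csSup (crest_bddAbove n T x) ⟨t, ht, rfl⟩

lemma crest_nonneg (n : ℕ) (T : ℝ) (hT : 0 ≤ T) (x : Fin n → ℂ) : 0 ≤ crest n T x :=
  le_trans (norm_nonneg _) (norm_ofdm_le_crest n T hT x ⟨le_refl 0, hT⟩)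

lemma crest_le (n : ℕ) (T : ℝ) (hT : 0 ≤ T) (x : Fin n → ℂ) :
    crest n T x ≤ (Real.sqrt n)⁻¹ * ∑ i, ‖x i‖ := by
  refine csSup_le ⟨‖ofdm n T x 0‖, ⟨0, ⟨le_refl 0, hT⟩, rfl⟩⟩ ?_
  rintro a ⟨t, _, rfl⟩
  exact ofdm_norm_le n T x t

lemma crest_sub_le (n : ℕ) (T : ℝ) (hT : 0 ≤ T) (x y : Fin n → ℂ) :
    crest n T x - crest n T y ≤ (Real.sqrt n)⁻¹ * ∑ i, ‖x i - y i‖ := by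
  rw [sub_le_iff_le_add]
  refine csSup_le ⟨‖ofdm n T x 0‖, ⟨0, ⟨le_refl 0, hT⟩, rfl⟩⟩ ?_
  rintro a ⟨t, ht, rfl⟩
  have h1 : ‖ofdm n T x t‖ ≤ ‖ofdm n T y t‖ + ‖ofdm n T x t - ofdm n T y t‖ := by
    have := norm_sub_norm_le (ofdm n T x t) (ofdm n T y t); linarith [this]
  have h2 : ‖ofdm n T x t - ofdm n T y t‖ ≤ (Real.sqrt n)⁻¹ * ∑ i, ‖x i - y i‖ := by
    rw [ofdm_sub]; exact ofdm_norm_le n T (x - y) t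
  have h3 := norm_ofdm_le_crest n T hT y ht
  calc ‖ofdm n T x t‖ ≤ ‖ofdm n T y t‖ + (Real.sqrt n)⁻¹ * ∑ i, ‖x i - y i‖ := by linarith
    _ ≤ (Real.sqrt n)⁻¹ * (∑ i, ‖x i - y i‖) + crest n T y := by linarith

lemma abs_crest_sub_le (n : ℕ) (T : ℝ) (hT : 0 ≤ T) (x y : Fin n → ℂ) :
    |crest n T x - crest n T y| ≤ (Real.sqrt n)⁻¹ * ∑ i, ‖x i - y i‖ := by
  rw [abs_sub_le_iff]
  constructor
  · exact crest_sub_le n T hT x y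
  · have := crest_sub_le n T hT y x
    simpa [norm_sub_rev] using this

lemma crest_continuous (n : ℕ) (T : ℝ) (hT : 0 ≤ T) : Continuous (crest n T) := by
  have hc : LipschitzWith (⟨(Real.sqrt n)⁻¹ * n, by positivity⟩) (crest n T) := by
    refine LipschitzWith.of_dist_le_mul fun x y => ?_
    rw [Real.dist_eq]
    refine (abs_crest_sub_le n T hT x y).trans ?_
    show _ ≤ (Real.sqrt n)⁻¹ * n * dist x y
    rw [mul_assoc]
    gcongr
    calc ∑ i, ‖x i - y i‖ ≤ ∑ _i : Fin n, dist x y := by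
          refine Finset.sum_le_sum fun i _ => ?_
          rw [← dist_eq_norm]
          exact dist_le_pi_dist x y i
      _ = n * dist x y := by simp [mul_comm]
  exact hc.continuous


-- Hoeffding-type step: mean-zero a.e.-bounded variable has subgaussian mgf
lemma mgf_step {E : Type*} [MeasurableSpace E] (ν : Measure E) [IsProbabilityMeasure ν]
    (h : E → ℝ) (hm : Measurable h) (c l : ℝ) (hc : 0 ≤ c)
    (hbd : ∀ᵐ z ∂ν, |h z| ≤ c) (hmean : ∫ z, h z ∂ν = 0) :
    ∫ z, Real.exp (l * h z) ∂ν ≤ Real.exp (l ^ 2 * c ^ 2 / 2) := by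
  rcases eq_or_lt_of_le hc with rfl | hc
  · have hz : ∀ᵐ z ∂ν, h z = 0 := by filter_upwards [hbd] with z hz; simpa using hz
    have : ∫ z, Real.exp (l * h z) ∂ν = ∫ _z, (1:ℝ) ∂ν := by
      refine integral_congr_ae ?_
      filter_upwards [hz] with z hz; simp [hz]
    rw [this]
    simp only [integral_const, measure_univ, probReal_univ, smul_eq_mul, mul_one]
    rw [Real.one_le_exp_iff]
    positivity
  -- c > 0
  have hint_h : Integrable h ν := by
    refine Integrable.mono' (integrable_const c) hm.aestronglyMeasurable ?_
    filter_upwards [hbd] with z hz; simpa using hz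
  have key : ∀ᵐ z ∂ν, Real.exp (l * h z) ≤
      Real.cosh (l * c) + (h z / c) * Real.sinh (l * c) := by
    filter_upwards [hbd] with z hz
    set y := h z with hy
    have hy1 : -c ≤ y := by cases abs_le.mp hz; assumption
    have hy2 : y ≤ c := by cases abs_le.mp hz; assumption
    have ha : (0:ℝ) ≤ (c - y) / (2 * c) := by
      apply div_nonneg <;> linarith
    have hb : (0:ℝ) ≤ (c + y) / (2 * c) := by
      apply div_nonneg <;> linarith
    have hab : (c - y) / (2 * c) + (c + y) / (2 * c) = 1 := by field_simp; ring
    have hcx := convexOn_exp.2 (Set.mem_univ (-(l * c))) (Set.mem_univ (l * c)) ha hb hab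
    simp only [smul_eq_mul] at hcx
    have harg : (c - y) / (2 * c) * -(l * c) + (c + y) / (2 * c) * (l * c) = l * y := by
      field_simp; ring
    rw [harg] at hcx
    refine hcx.trans_eq ?_
    rw [Real.cosh_eq, Real.sinh_eq]
    field_simp
    ring
  have hint_lhs : Integrable (fun z => Real.exp (l * h z)) ν := by
    refine Integrable.mono' (integrable_const (Real.exp (|l| * c)))
      ((hm.const_mul l).exp.aestronglyMeasurable) ?_
    filter_upwards [hbd] with z hz
    rw [Real.norm_eq_abs, abs_of_pos (Real.exp_pos _), Real.exp_le_exp]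
    calc l * h z ≤ |l * h z| := le_abs_self _
      _ = |l| * |h z| := abs_mul _ _
      _ ≤ |l| * c := by gcongr
  have hint_rhs : Integrable (fun z => Real.cosh (l * c) + (h z / c) * Real.sinh (l * c)) ν := by
    refine Integrable.add (integrable_const _) ?_
    exact (hint_h.div_const c).mul_const _
  calc ∫ z, Real.exp (l * h z) ∂ν
      ≤ ∫ z, (Real.cosh (l * c) + (h z / c) * Real.sinh (l * c)) ∂ν :=
        integral_mono_ae hint_lhs hint_rhs key
    _ = Real.cosh (l * c) := by
        rw [integral_add (integrable_const _) ((hint_h.div_const c).mul_const _),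
          integral_const, integral_mul_const, integral_div, hmean]
        simp
    _ ≤ Real.exp ((l * c) ^ 2 / 2) := Real.cosh_le_exp_half_sq _
    _ = Real.exp (l ^ 2 * c ^ 2 / 2) := by ring_nf

lemma mgf_pi (c B : ℝ) (hc : 0 ≤ c) :
    ∀ (n : ℕ) (ν : Fin n → Measure ℂ), (∀ i, IsProbabilityMeasure (ν i)) →
    ∀ (f : (Fin n → ℂ) → ℝ) (l : ℝ), Measurable f → (∀ x, |f x| ≤ B) →
    (∀ i, ∀ᵐ z ∂ν i, ‖z‖ = 1) →
    (∀ (x : Fin n → ℂ) (i : Fin n) (z w : ℂ), ‖z‖ = 1 → ‖w‖ = 1 →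
        |f (Function.update x i z) - f (Function.update x i w)| ≤ c) →
    ∫ x, Real.exp (l * f x) ∂(Measure.pi ν) ≤
      Real.exp (l * ∫ x, f x ∂(Measure.pi ν) + n * (l ^ 2 * c ^ 2 / 2)) := by
  intro n
  induction n with
  | zero =>
    intro ν hprob f l hf hB hsupp hlip
    haveI := hprob
    haveI : IsProbabilityMeasure (Measure.pi ν) := inferInstance
    have e1 : ∫ x, Real.exp (l * f x) ∂(Measure.pi ν)
        = Real.exp (l * f (fun i => i.elim0)) := by
      rw [show (fun x : Fin 0 → ℂ => Real.exp (l * f x))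
          = fun _ => Real.exp (l * f fun i => i.elim0) from
        funext fun x => by rw [Subsingleton.elim x (fun i => i.elim0)]]
      simp
    have e2 : ∫ x, f x ∂(Measure.pi ν) = f (fun i => i.elim0) := by
      rw [show (fun x : Fin 0 → ℂ => f x) = fun _ => f fun i => i.elim0 from
        funext fun x => by rw [Subsingleton.elim x (fun i => i.elim0)]]
      simp
    rw [e1, e2]
    simp
  | succ n IH =>
    intro ν hprob f l hf hB hsupp hlip
    haveI := hprob
    set ν' : Fin n → Measure ℂ := fun j => ν ((0 : Fin (n+1)).succAbove j) with hν'
    haveI hprob' : ∀ j, IsProbabilityMeasure (ν' j) := fun j => hprob _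
    haveI : IsProbabilityMeasure (Measure.pi ν') := inferInstance
    haveI : IsProbabilityMeasure (ν 0) := hprob 0
    set π : Measure (Fin (n+1) → ℂ) := Measure.pi ν with hπ
    set π' : Measure (Fin n → ℂ) := Measure.pi ν' with hπ'
    set ρ : Measure (ℂ × (Fin n → ℂ)) := (ν 0).prod π' with hρdef
    haveI : IsProbabilityMeasure ρ := by rw [hρdef]; infer_instance
    set e := MeasurableEquiv.piFinSuccAbove (fun _ : Fin (n+1) => ℂ) 0 with he
    have mp : MeasurePreserving e π ρ := measurePreserving_piFinSuccAbove ν 0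
    have hsymm : ∀ p : ℂ × (Fin n → ℂ), e.symm p = Fin.cons p.1 p.2 := by
      intro p
      simp [he, MeasurableEquiv.piFinSuccAbove, Fin.insertNthEquiv, Fin.insertNth_zero']
    have htrans : ∀ (F : (Fin (n+1) → ℂ) → ℝ),
        ∫ x, F x ∂π = ∫ p, F (Fin.cons p.1 p.2) ∂ρ := by
      intro F
      have := mp.integral_comp' (g := fun p => F (e.symm p))
      simp only [MeasurableEquiv.symm_apply_apply] at this
      rw [this]
      exact integral_congr_ae (Filter.Eventually.of_forall fun p =>
        show F (e.symm p) = F (Fin.cons p.1 p.2) from congrArg F (hsymm p))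
    -- measurability of the cons pairing
    have hcons : Measurable (fun p : ℂ × (Fin n → ℂ) => (Fin.cons p.1 p.2 : Fin (n+1) → ℂ)) := by
      apply measurable_pi_iff.2
      intro j
      refine Fin.cases ?_ ?_ j
      · simpa using measurable_fst
      · intro k; simp only [Fin.cons_succ]; exact (measurable_pi_apply k).comp measurable_snd
    have hpair : Measurable (fun p : ℂ × (Fin n → ℂ) => f (Fin.cons p.1 p.2)) := hf.comp hcons
    have hsec : ∀ Y : Fin n → ℂ, Measurable (fun u : ℂ => f (Fin.cons u Y)) := fun Y =>
      hpair.comp (measurable_id.prodMk measurable_const)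
    have hsecInt : ∀ Y : Fin n → ℂ, Integrable (fun u : ℂ => f (Fin.cons u Y)) (ν 0) := fun Y =>
      Integrable.mono' (integrable_const B) (hsec Y).aestronglyMeasurable
        (Filter.Eventually.of_forall fun u => by simpa using hB _)
    -- the conditional mean g
    set g : (Fin n → ℂ) → ℝ := fun y => ∫ z, f (Fin.cons z y) ∂(ν 0) with hg
    have hg_meas : Measurable g := by
      have := hpair.stronglyMeasurable.integral_prod_left' (μ := ν 0)
      exact this.measurable
    have hgB : ∀ y, |g y| ≤ B := by
      intro y
      have := norm_integral_le_of_norm_le_const (μ := ν 0)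
        (f := fun z => f (Fin.cons z y)) (C := B)
        (Filter.Eventually.of_forall fun z => by simpa using hB _)
      simpa using this
    have hglip : ∀ (y : Fin n → ℂ) (j : Fin n) (z w : ℂ), ‖z‖ = 1 → ‖w‖ = 1 →
        |g (Function.update y j z) - g (Function.update y j w)| ≤ c := by
      intro y j z w hz hw
      rw [hg]
      rw [← integral_sub (hsecInt _) (hsecInt _)]
      have hb : ∀ᵐ u ∂(ν 0), ‖f (Fin.cons u (Function.update y j z))
          - f (Fin.cons u (Function.update y j w))‖ ≤ c := by
        refine Filter.Eventually.of_forall fun u => ?_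
        rw [Real.norm_eq_abs, Fin.cons_update, Fin.cons_update]
        exact hlip _ _ _ _ hz hw
      have := norm_integral_le_of_norm_le_const (μ := ν 0) hb
      simpa using this
    -- inner Hoeffding bound
    have hinner : ∀ y : Fin n → ℂ, ∫ z, Real.exp (l * f (Fin.cons z y)) ∂(ν 0) ≤
        Real.exp (l * g y) * Real.exp (l ^ 2 * c ^ 2 / 2) := by
      intro y
      set h : ℂ → ℝ := fun z => f (Fin.cons z y) - g y with hh
      have hm : Measurable h := (hsec y).sub measurable_const
      have hmean : ∫ z, h z ∂(ν 0) = 0 := by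
        rw [hh]
        rw [integral_sub (hsecInt y) (integrable_const _)]
        simp [hg]
      have hbd : ∀ᵐ z ∂(ν 0), |h z| ≤ c := by
        filter_upwards [hsupp 0] with z hz
        have : f (Fin.cons z y) - g y
            = ∫ w, (f (Fin.cons z y) - f (Fin.cons w y)) ∂(ν 0) := by
          rw [integral_sub (integrable_const _) (hsecInt y), integral_const]
          simp [hg]
        rw [hh]
        simp only [this]
        have hb : ∀ᵐ w ∂(ν 0), ‖f (Fin.cons z y) - f (Fin.cons w y)‖ ≤ c := by
          filter_upwards [hsupp 0] with w hw
          have := hlip (Fin.cons w y) 0 z w hz hw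
          rw [Real.norm_eq_abs]
          rwa [Fin.update_cons_zero, Fin.update_cons_zero] at this
        have := norm_integral_le_of_norm_le_const (μ := ν 0) hb
        simpa using this
      have hstep := mgf_step (ν 0) h hm c l hc hbd hmean
      have heq : (fun z => Real.exp (l * f (Fin.cons z y)))
          = fun z => Real.exp (l * g y) * Real.exp (l * h z) := by
        funext z
        rw [← Real.exp_add, hh]
        ring_nf
      rw [heq, integral_const_mul]
      exact mul_le_mul_of_nonneg_left hstep (Real.exp_nonneg _)
    -- integrability on the product
    have hexp_bound : ∀ r : ℝ, |r| ≤ B → Real.exp (l * r) ≤ Real.exp (|l| * B) := by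
      intro r hr
      rw [Real.exp_le_exp]
      calc l * r ≤ |l * r| := le_abs_self _
        _ = |l| * |r| := abs_mul _ _
        _ ≤ |l| * B := by
            apply mul_le_mul_of_nonneg_left hr (abs_nonneg l)
    have hIntPairf : Integrable (fun p : ℂ × (Fin n → ℂ) => f (Fin.cons p.1 p.2)) ρ :=
      Integrable.mono' (integrable_const B) hpair.aestronglyMeasurable
        (Filter.Eventually.of_forall fun p => by simpa using hB _)
    have hIntPair : Integrable
        (fun p : ℂ × (Fin n → ℂ) => Real.exp (l * f (Fin.cons p.1 p.2))) ρ :=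
      Integrable.mono' (integrable_const (Real.exp (|l| * B)))
        ((hpair.const_mul l).exp.aestronglyMeasurable)
        (Filter.Eventually.of_forall fun p => by
          rw [Real.norm_eq_abs, abs_of_pos (Real.exp_pos _)]
          exact hexp_bound _ (hB _))
    have hsupp' : ∀ j, ∀ᵐ z ∂ν' j, ‖z‖ = 1 := fun j => hsupp _
    have hgint : ∫ y, g y ∂π' = ∫ x, f x ∂π := by
      rw [htrans f]
      exact (integral_prod_symm _ hIntPairf).symm
    have hi1 : Integrable (fun y => ∫ z, Real.exp (l * f (Fin.cons z y)) ∂(ν 0)) π' :=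
      hIntPair.integral_prod_right
    have hi2 : Integrable (fun y => Real.exp (l * g y) * Real.exp (l ^ 2 * c ^ 2 / 2)) π' :=
      Integrable.mono' (integrable_const (Real.exp (|l| * B) * Real.exp (l ^ 2 * c ^ 2 / 2)))
        (((hg_meas.const_mul l).exp.mul_const _).aestronglyMeasurable)
        (Filter.Eventually.of_forall fun y => by
          rw [Real.norm_eq_abs, abs_of_pos (by positivity)]
          exact mul_le_mul_of_nonneg_right (hexp_bound _ (hgB y)) (Real.exp_nonneg _))
    calc ∫ x, Real.exp (l * f x) ∂π
        = ∫ p, Real.exp (l * f (Fin.cons p.1 p.2)) ∂ρ := htrans _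
      _ = ∫ y, ∫ z, Real.exp (l * f (Fin.cons z y)) ∂(ν 0) ∂π' := integral_prod_symm _ hIntPair
      _ ≤ ∫ y, Real.exp (l * g y) * Real.exp (l ^ 2 * c ^ 2 / 2) ∂π' :=
          integral_mono hi1 hi2 hinner
      _ = (∫ y, Real.exp (l * g y) ∂π') * Real.exp (l ^ 2 * c ^ 2 / 2) := integral_mul_const _ _
      _ ≤ Real.exp (l * ∫ y, g y ∂π' + n * (l ^ 2 * c ^ 2 / 2)) * Real.exp (l ^ 2 * c ^ 2 / 2) :=
          mul_le_mul_of_nonneg_right (IH ν' hprob' g l hg_meas hgB hsupp' hglip)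
            (Real.exp_nonneg _)
      _ = Real.exp (l * ∫ x, f x ∂π + (n + 1 : ℕ) * (l ^ 2 * c ^ 2 / 2)) := by
          rw [hgint, ← Real.exp_add]
          congr 1
          push_cast
          ring

lemma tail_pi (c B : ℝ) (hc : 0 ≤ c) (n : ℕ) (ν : Fin n → Measure ℂ)
    (hprob : ∀ i, IsProbabilityMeasure (ν i))
    (f : (Fin n → ℂ) → ℝ) (hf : Measurable f) (hB : ∀ x, |f x| ≤ B)
    (hsupp : ∀ i, ∀ᵐ z ∂ν i, ‖z‖ = 1)
    (hlip : ∀ (x : Fin n → ℂ) (i : Fin n) (z w : ℂ), ‖z‖ = 1 → ‖w‖ = 1 →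
        |f (Function.update x i z) - f (Function.update x i w)| ≤ c)
    (hK : 0 < (n : ℝ) * c ^ 2) (s : ℝ) (hs : 0 ≤ s) :
    ((Measure.pi ν) {x | s ≤ f x - ∫ x, f x ∂(Measure.pi ν)}).toReal ≤
      Real.exp (- s ^ 2 / (2 * ((n : ℝ) * c ^ 2))) := by
  haveI := hprob
  haveI : IsProbabilityMeasure (Measure.pi ν) := inferInstance
  set π := Measure.pi ν with hπ
  set E := ∫ x, f x ∂π with hE
  set K := (n : ℝ) * c ^ 2 with hKdef
  set t := s / K with ht
  have htnn : 0 ≤ t := div_nonneg hs hK.le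
  set X : (Fin n → ℂ) → ℝ := fun x => f x - E with hX
  have hXmeas : Measurable X := hf.sub measurable_const
  have hint : Integrable (fun x => Real.exp (t * X x)) π := by
    refine Integrable.mono' (integrable_const (Real.exp (|t| * (B + |E|))))
      ((hXmeas.const_mul t).exp.aestronglyMeasurable)
      (Filter.Eventually.of_forall fun x => ?_)
    rw [Real.norm_eq_abs, abs_of_pos (Real.exp_pos _), Real.exp_le_exp]
    calc t * X x ≤ |t * X x| := le_abs_self _
      _ = |t| * |X x| := abs_mul _ _
      _ ≤ |t| * (B + |E|) := by
          refine mul_le_mul_of_nonneg_left ?_ (abs_nonneg t)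
          calc |X x| = |f x - E| := rfl
            _ ≤ |f x| + |E| := abs_sub _ _
            _ ≤ B + |E| := by have := hB x; linarith
  have hmark := ProbabilityTheory.measure_ge_le_exp_mul_mgf (μ := π) (X := X) s htnn hint
  refine hmark.trans ?_
  have hmgf : ProbabilityTheory.mgf X π t ≤ Real.exp (K * t ^ 2 / 2) := by
    have h1 : ProbabilityTheory.mgf X π t
        = Real.exp (- (t * E)) * ∫ x, Real.exp (t * f x) ∂π := by
      rw [ProbabilityTheory.mgf, ← integral_const_mul]
      refine integral_congr_ae (Filter.Eventually.of_forall fun x => ?_)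
      show Real.exp (t * X x) = Real.exp (-(t * E)) * Real.exp (t * f x)
      rw [← Real.exp_add, hX]
      ring_nf
    rw [h1]
    have h2 := mgf_pi c B hc n ν hprob f t hf hB hsupp hlip
    calc Real.exp (-(t * E)) * ∫ x, Real.exp (t * f x) ∂π
        ≤ Real.exp (-(t * E)) * Real.exp (t * E + n * (t ^ 2 * c ^ 2 / 2)) :=
          mul_le_mul_of_nonneg_left h2 (Real.exp_nonneg _)
      _ = Real.exp (K * t ^ 2 / 2) := by rw [← Real.exp_add]; congr 1; rw [hKdef]; ring
  calc Real.exp (-t * s) * ProbabilityTheory.mgf X π t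
      ≤ Real.exp (-t * s) * Real.exp (K * t ^ 2 / 2) :=
        mul_le_mul_of_nonneg_left hmgf (Real.exp_nonneg _)
    _ = Real.exp (- s ^ 2 / (2 * K)) := by
        rw [← Real.exp_add]
        congr 1
        rw [ht]
        field_simp
        ring

set_option maxHeartbeats 2000000 in
theorem stmt_9 {Ω : Type*} [MeasurableSpace Ω] (μ : Measure Ω) [IsProbabilityMeasure μ]
    (n : ℕ) (hn : 0 < n) (T : ℝ) (hT : 0 < T)
    (X : Fin n → Ω → ℂ) (hmeas : ∀ j, Measurable (X j))
    (hindep : ProbabilityTheory.iIndepFun X μ)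
    (hident : ∀ i j, Measure.map (X i) μ = Measure.map (X j) μ)
    (hunit : ∀ j, ∀ᵐ ω ∂μ, ‖X j ω‖ = 1)
    (m : ℝ)
    (hm₁ : (1 : ℝ) / 2 ≤ (μ {ω | crest n T (fun j => X j ω) ≤ m}).toReal)
    (hm₂ : (1 : ℝ) / 2 ≤ (μ {ω | m ≤ crest n T (fun j => X j ω)}).toReal)
    (α : ℝ) (hα : 0 ≤ α) :
    (μ {ω | α ≤ |crest n T (fun j => X j ω) - m|}).toReal ≤
      4 * Real.exp (-α ^ 2 / 16) := by
  classical
  -- push everything to the product space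
  set ν : Fin n → Measure ℂ := fun i => μ.map (X i) with hν
  haveI hνprob : ∀ i, IsProbabilityMeasure (ν i) := fun i =>
    Measure.isProbabilityMeasure_map (hmeas i).aemeasurable
  set π : Measure (Fin n → ℂ) := Measure.pi ν with hπ
  haveI : IsProbabilityMeasure π := by rw [hπ]; infer_instance
  set Φ : Ω → (Fin n → ℂ) := fun ω i => X i ω with hΦdef
  have hΦ : Measurable Φ := measurable_pi_lambda _ fun i => hmeas i
  have hmap : μ.map Φ = π := by
    rw [hπ]
    refine (Measure.pi_eq (μ := ν) fun s hs => ?_).symm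
    rw [Measure.map_apply hΦ (MeasurableSet.univ_pi hs)]
    have hpre : Φ ⁻¹' Set.pi Set.univ s = ⋂ i, X i ⁻¹' s i := by
      ext ω; simp [hΦdef, Set.mem_pi]
    rw [hpre, hindep.meas_iInter (fun i => ⟨s i, hs i, rfl⟩)]
    exact Finset.prod_congr rfl fun i _ => (Measure.map_apply (hmeas i) (hs i)).symm
  have hμπ : ∀ S : Set (Fin n → ℂ), MeasurableSet S → μ (Φ ⁻¹' S) = π S := by
    intro S hS
    rw [← hmap, Measure.map_apply hΦ hS]
  have hsupp : ∀ i, ∀ᵐ z ∂ν i, ‖z‖ = 1 := by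
    intro i
    rw [hν]
    rw [ae_map_iff (hmeas i).aemeasurable (by
      exact measurableSet_eq_fun (measurable_norm) measurable_const)]
    exact hunit i
  -- the truncated crest function
  set proj : ℂ → ℂ := fun z => if ‖z‖ = 1 then z else 1 with hproj
  have hprojm : Measurable proj := by
    refine Measurable.ite ?_ measurable_id measurable_const
    exact measurableSet_eq_fun (measurable_norm) measurable_const
  have hprojnorm : ∀ z, ‖proj z‖ = 1 := by
    intro z
    have hz : proj z = if ‖z‖ = 1 then z else 1 := rfl
    by_cases h : ‖z‖ = 1
    · rw [hz, if_pos h, h]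
    · rw [hz, if_neg h, norm_one]
  have hprojeq : ∀ z, ‖z‖ = 1 → proj z = z := fun z hz => by rw [hproj]; simp [hz]
  set f : (Fin n → ℂ) → ℝ := fun x => crest n T (fun i => proj (x i)) with hf
  have hfmeas : Measurable f :=
    (crest_continuous n T hT.le).measurable.comp
      (measurable_pi_lambda _ fun i => hprojm.comp (measurable_pi_apply i))
  have hsqrtpos : 0 < Real.sqrt n := Real.sqrt_pos.2 (by exact_mod_cast hn)
  set B : ℝ := Real.sqrt n with hB
  have hfB : ∀ x, |f x| ≤ B := by
    intro x
    rw [abs_of_nonneg (crest_nonneg n T hT.le _)]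
    refine (crest_le n T hT.le _).trans ?_
    have : ∑ i : Fin n, ‖proj (x i)‖ = (n : ℝ) := by
      rw [Finset.sum_congr rfl fun i _ => hprojnorm (x i)]
      simp
    rw [this, hB]
    rw [inv_mul_eq_div, Real.div_sqrt]
  set c : ℝ := 2 / Real.sqrt n with hc
  have hcpos : 0 < c := by positivity
  have hflip : ∀ (x : Fin n → ℂ) (i : Fin n) (z w : ℂ), ‖z‖ = 1 → ‖w‖ = 1 →
      |f (Function.update x i z) - f (Function.update x i w)| ≤ c := by
    intro x i z w hz hw
    have hkey : ∀ u : ℂ, ‖u‖ = 1 →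
        (fun j => proj (Function.update x i u j)) =
          Function.update (fun j => proj (x j)) i u := by
      intro u hu
      funext j
      by_cases hj : j = i
      · subst hj; simp [hprojeq u hu]
      · simp [Function.update_of_ne hj]
    rw [hf]
    simp only [hkey z hz, hkey w hw]
    refine (abs_crest_sub_le n T hT.le _ _).trans ?_
    have hsum : ∑ j : Fin n, ‖Function.update (fun j => proj (x j)) i z j -
        Function.update (fun j => proj (x j)) i w j‖ = ‖z - w‖ := by
      rw [Finset.sum_eq_single i]
      · simp
      · intro j _ hj
        simp [Function.update_of_ne hj]
      · simp
    rw [hsum, hc]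
    rw [div_eq_inv_mul]
    refine mul_le_mul_of_nonneg_left ?_ (by positivity)
    calc ‖z - w‖ ≤ ‖z‖ + ‖w‖ := norm_sub_le _ _
      _ = 2 := by rw [hz, hw]; norm_num
  have hK : (n : ℝ) * c ^ 2 = 4 := by
    rw [hc, div_pow, Real.sq_sqrt (by exact_mod_cast hn.le),
      show (2:ℝ) ^ 2 = 4 by norm_num]
    have hn0 : (n : ℝ) ≠ 0 := by exact_mod_cast hn.ne'
    field_simp
  have hKpos : 0 < (n : ℝ) * c ^ 2 := by rw [hK]; norm_num
  -- a.e. equality of f and crest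
  have hae : ∀ᵐ x ∂π, f x = crest n T x := by
    have hcoord : ∀ᵐ x ∂π, ∀ i, ‖x i‖ = 1 := by
      rw [ae_all_iff]
      intro i
      have ht := Measure.tendsto_eval_ae_ae (μ := ν) (i := i)
      rw [hπ]
      exact ht.eventually (hsupp i)
    filter_upwards [hcoord] with x hx
    show crest n T (fun i => proj (x i)) = crest n T x
    congr 1
    funext i
    exact hprojeq (x i) (hx i)
  set E : ℝ := ∫ x, f x ∂π with hE
  set c₀ : ℝ := Real.sqrt (8 * Real.log 2) with hc₀
  have hlog2 : 0 < Real.log 2 := Real.log_pos (by norm_num)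
  have hc0pos : 0 < c₀ := Real.sqrt_pos.2 (by positivity)
  have hc0sq : c₀ ^ 2 = 8 * Real.log 2 := Real.sq_sqrt (by positivity)
  -- upper tail
  have htail₁ : ∀ s : ℝ, 0 ≤ s → (π {x | s ≤ f x - E}).toReal ≤ Real.exp (-s ^ 2 / 8) := by
    intro s hs
    have := tail_pi c B hcpos.le n ν hνprob f hfmeas hfB hsupp hflip hKpos s hs
    rw [hK] at this
    rw [hπ, hE, hπ]
    convert this using 3
    norm_num
  -- lower tail
  have htail₂ : ∀ s : ℝ, 0 ≤ s → (π {x | s ≤ E - f x}).toReal ≤ Real.exp (-s ^ 2 / 8) := by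
    intro s hs
    have hglip : ∀ (x : Fin n → ℂ) (i : Fin n) (z w : ℂ), ‖z‖ = 1 → ‖w‖ = 1 →
        |(fun x => -f x) (Function.update x i z) - (fun x => -f x) (Function.update x i w)| ≤ c := by
      intro x i z w hz hw
      have h := hflip x i z w hz hw
      show |-f (Function.update x i z) - -f (Function.update x i w)| ≤ c
      rw [show -f (Function.update x i z) - -f (Function.update x i w)
          = -(f (Function.update x i z) - f (Function.update x i w)) by ring, abs_neg]
      exact h
    have hgB : ∀ x, |(fun x => -f x) x| ≤ B := fun x => by simpa using hfB x
    have := tail_pi c B hcpos.le n ν hνprob (fun x => -f x) hfmeas.neg hgB hsupp hglip hKpos s hs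
    rw [hK] at this
    have hEg : ∫ x, (fun x => -f x) x ∂(Measure.pi ν) = -E := by
      rw [hE, hπ]
      exact integral_neg f
    rw [hEg] at this
    have hseteq : {x | s ≤ (fun x => -f x) x - -E} = {x | s ≤ E - f x} := by
      ext x
      simp only [Set.mem_setOf_eq, sub_neg_eq_add]
      constructor <;> intro h <;> linarith
    rw [hseteq] at this
    rw [hπ]
    convert this using 3
    norm_num
  -- transfer median hypotheses
  have hcm : Measurable (crest n T) := (crest_continuous n T hT.le).measurable
  have hmf₂ : 1 / 2 ≤ (π {x | m ≤ f x}).toReal := by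
    have hset : {ω | m ≤ crest n T (fun j => X j ω)} = Φ ⁻¹' {x | m ≤ crest n T x} := rfl
    rw [hset, hμπ _ (measurableSet_le measurable_const hcm)] at hm₂
    have hcong : {x | m ≤ f x} =ᵐ[π] {x | m ≤ crest n T x} := by
      filter_upwards [hae] with x hx
      show (m ≤ f x) = (m ≤ crest n T x)
      rw [hx]
    rw [measure_congr hcong]
    exact hm₂
  have hmf₁ : 1 / 2 ≤ (π {x | f x ≤ m}).toReal := by
    have hset : {ω | crest n T (fun j => X j ω) ≤ m} = Φ ⁻¹' {x | crest n T x ≤ m} := rfl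
    rw [hset, hμπ _ (measurableSet_le hcm measurable_const)] at hm₁
    have hcong : {x | f x ≤ m} =ᵐ[π] {x | crest n T x ≤ m} := by
      filter_upwards [hae] with x hx
      show (f x ≤ m) = (crest n T x ≤ m)
      rw [hx]
    rw [measure_congr hcong]
    exact hm₁
  have hehalf : Real.exp (-(c₀ ^ 2) / 8) = 1 / 2 := by
    rw [hc0sq, show -(8 * Real.log 2) / 8 = -Real.log 2 by ring, Real.exp_neg,
      Real.exp_log (by norm_num)]
    norm_num
  -- median is close to the mean
  have hub : m ≤ E + c₀ := by
    by_contra hcon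
    push_neg at hcon
    set s : ℝ := (m - E + c₀) / 2 with hsdef
    have hs1 : c₀ < s := by rw [hsdef]; linarith
    have hs2 : s < m - E := by rw [hsdef]; linarith
    have hsub : {x | m ≤ f x} ⊆ {x | s ≤ f x - E} := by
      intro x hx
      simp only [Set.mem_setOf_eq] at *
      linarith
    have h1 : (π {x | m ≤ f x}).toReal ≤ (π {x | s ≤ f x - E}).toReal :=
      ENNReal.toReal_mono (measure_ne_top _ _) (measure_mono hsub)
    have h2 := htail₁ s (by linarith [hc0pos.le])
    have h3 : Real.exp (-s ^ 2 / 8) < 1 / 2 := by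
      rw [← hehalf, Real.exp_lt_exp]
      nlinarith [hc0pos, hs1]
    linarith only [hmf₂, h1, h2, h3]
  have hlb : E - c₀ ≤ m := by
    by_contra hcon
    push_neg at hcon
    set s : ℝ := (E - m + c₀) / 2 with hsdef
    have hs1 : c₀ < s := by rw [hsdef]; linarith
    have hs2 : s < E - m := by rw [hsdef]; linarith
    have hsub : {x | f x ≤ m} ⊆ {x | s ≤ E - f x} := by
      intro x hx
      simp only [Set.mem_setOf_eq] at *
      linarith
    have h1 : (π {x | f x ≤ m}).toReal ≤ (π {x | s ≤ E - f x}).toReal :=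
      ENNReal.toReal_mono (measure_ne_top _ _) (measure_mono hsub)
    have h2 := htail₂ s (by linarith [hc0pos.le])
    have h3 : Real.exp (-s ^ 2 / 8) < 1 / 2 := by
      rw [← hehalf, Real.exp_lt_exp]
      nlinarith [hc0pos, hs1]
    linarith only [hmf₁, h1, h2, h3]
  -- rewrite the goal on the product space
  have hset : {ω | α ≤ |crest n T (fun j => X j ω) - m|}
      = Φ ⁻¹' {x | α ≤ |crest n T x - m|} := rfl
  rw [hset, hμπ {x | α ≤ |crest n T x - m|} (measurableSet_le measurable_const ((hcm.sub measurable_const).abs))]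
  have hcong : {x | α ≤ |crest n T x - m|} =ᵐ[π] {x | α ≤ |f x - m|} := by
    filter_upwards [hae] with x hx
    show (α ≤ |crest n T x - m|) = (α ≤ |f x - m|)
    rw [hx]
  rw [measure_congr hcong]
  -- final case analysis
  by_cases hcase : α ≤ 2 * c₀
  · -- trivial bound
    have h1 : (π {x | α ≤ |f x - m|}).toReal ≤ 1 := by
      rw [show (1:ℝ) = (π Set.univ).toReal by simp]
      exact ENNReal.toReal_mono (measure_ne_top _ _) (measure_mono (Set.subset_univ _))
    have h2 : (1:ℝ) ≤ 4 * Real.exp (-α ^ 2 / 16) := by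
      have he4 : Real.exp (-(2 * Real.log 2)) = 1 / 4 := by
        rw [show (-(2 * Real.log 2)) = Real.log (((2:ℝ) ^ 2)⁻¹) by
          rw [Real.log_inv, Real.log_pow]; push_cast; ring]
        rw [Real.exp_log (by norm_num)]
        norm_num
      have hmono : Real.exp (-(2 * Real.log 2)) ≤ Real.exp (-α ^ 2 / 16) := by
        rw [Real.exp_le_exp]
        nlinarith [hc0sq, hα, hcase]
      rw [he4] at hmono
      linarith only [hmono]
    linarith only [h1, h2]
  · push_neg at hcase
    set s : ℝ := α - c₀ with hsdef
    have hs : 0 ≤ s := by rw [hsdef]; linarith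
    have hsub : {x | α ≤ |f x - m|} ⊆ {x | s ≤ f x - E} ∪ {x | s ≤ E - f x} := by
      intro x hx
      simp only [Set.mem_setOf_eq] at hx
      rcases le_abs.mp hx with h | h
      · left
        simp only [Set.mem_setOf_eq]
        rw [hsdef]
        linarith
      · right
        simp only [Set.mem_setOf_eq]
        rw [hsdef]
        linarith
    have h0 : π {x | α ≤ |f x - m|} ≤ π {x | s ≤ f x - E} + π {x | s ≤ E - f x} :=
      (measure_mono hsub).trans (measure_union_le _ _)
    have h1 : (π {x | α ≤ |f x - m|}).toReal
        ≤ (π {x | s ≤ f x - E}).toReal + (π {x | s ≤ E - f x}).toReal := by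
      have hne : π {x | s ≤ f x - E} + π {x | s ≤ E - f x} ≠ ⊤ :=
        ENNReal.add_ne_top.2 ⟨measure_ne_top _ _, measure_ne_top _ _⟩
      calc (π {x | α ≤ |f x - m|}).toReal
          ≤ (π {x | s ≤ f x - E} + π {x | s ≤ E - f x}).toReal :=
            ENNReal.toReal_mono hne h0
        _ = (π {x | s ≤ f x - E}).toReal + (π {x | s ≤ E - f x}).toReal :=
            ENNReal.toReal_add (measure_ne_top _ _) (measure_ne_top _ _)
    have h2 := htail₁ s hs
    have h3 := htail₂ s hs
    have harith : 2 * Real.exp (-s ^ 2 / 8) ≤ 4 * Real.exp (-α ^ 2 / 16) := by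
      have key : Real.exp (-s ^ 2 / 8) ≤ 2 * Real.exp (-α ^ 2 / 16) := by
        rw [show (2:ℝ) = Real.exp (Real.log 2) from (Real.exp_log (by norm_num)).symm,
          ← Real.exp_add, Real.exp_le_exp, hsdef]
        nlinarith [sq_nonneg (α - 2 * c₀), hc0sq]
      linarith only [key]
    linarith only [h1, h2, h3, harith]
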